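/- Asymptotically almost surely the number of connected components of G_1^n is (1/2 + o(1))·log n; that is, for every ε > 0, the probability that | C_n / log n − 1/2 | ≤ ε tends to 1 as n → ∞, where C_n is the number of connected components of (the underlying simple graph of) G_1^n. -/
import Mathlib


open Finset

noncomputable section

/-- Sample space for the preferential attachment process `G_1^N` (0-indexed vertices):
at step `t` the new vertex `t` sends its single edge to the vertex `σ t ≤ t`
(a loop when `σ t = t`). -/
abbrev PASpace (N : ℕ) : Type := ∀ t : Fin N, Fin (t.1 + 1)

/-- The degree of vertex `s` in `G_1^t` (the graph after `t` steps), loops counted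
twice: one for its own out-edge (if `s < t`) plus the number of in-edges received. -/
def paDeg {N : ℕ} (σ : PASpace N) (s t : ℕ) : ℕ :=
  (if s < t then 1 else 0) +
    (Finset.univ.filter (fun j : Fin N => j.1 < t ∧ (σ j : ℕ) = s)).card

/-- The probability of the outcome `σ` of the preferential attachment process: at step
`t`, vertex `σ t = s < t` is chosen with probability `deg(s, t)/(2t+1)` and `σ t = t`
(a loop) with probability `1/(2t+1)` (0-indexed steps). -/
noncomputable def paWeight {N : ℕ} (σ : PASpace N) : ℝ :=
  ∏ t : Fin N,
    ((paDeg σ (σ t : ℕ) t.1 : ℝ) + (if (σ t : ℕ) = t.1 then 1 else 0)) /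
      (2 * (t.1 : ℝ) + 1)

open scoped Classical in
/-- The probability of the event `E` for the preferential attachment process `G_1^N`. -/
noncomputable def paProb (N : ℕ) (E : PASpace N → Prop) : ℝ :=
  ∑ σ : PASpace N, if E σ then paWeight σ else 0

/-- The degree of vertex `j` of the multigraph `G_m^s` (obtained from `G_1^{ms}` by
identifying consecutive blocks of `m` vertices), loops counted twice; the ambient
process runs for `m·n ≥ m·s` steps. -/
def paDegM (m n : ℕ) (σ : PASpace (m * n)) (j s : ℕ) : ℕ :=
  (Finset.univ.filter (fun t : Fin (m * n) => t.1 < m * s ∧ t.1 / m = j)).card +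
    (Finset.univ.filter (fun t : Fin (m * n) => t.1 < m * s ∧ (σ t : ℕ) / m = j)).card

/-- The number of edges (with multiplicity, loops included) of `G_m^n` with both
endpoints in `A`. -/
def paEdgesIn (m n : ℕ) (σ : PASpace (m * n)) (A : Finset ℕ) : ℕ :=
  (Finset.univ.filter
    (fun t : Fin (m * n) => t.1 / m ∈ A ∧ (σ t : ℕ) / m ∈ A)).card

/-- The modularity `q_𝒜(G_m^n)` of a partition `𝒜` of the vertex set `{0, …, n−1}` of
the multigraph `G_m^n`, which has exactly `m·n` edges. -/
noncomputable def paQ (m n : ℕ) (σ : PASpace (m * n))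
    (P : Finpartition (Finset.range n)) : ℝ :=
  ∑ A ∈ P.parts,
    ((paEdgesIn m n σ A : ℝ) / (m * n) -
      (∑ j ∈ A, (paDegM m n σ j n : ℝ)) ^ 2 / (4 * ((m : ℝ) * n) ^ 2))

/-- The modularity `q*(G_m^n)`: the maximum of `q_𝒜` over all partitions `𝒜`. -/
noncomputable def paModularity (m n : ℕ) (σ : PASpace (m * n)) : ℝ :=
  sSup {q : ℝ | ∃ P : Finpartition (Finset.range n), q = paQ m n σ P}

/-- The simple graph underlying `G_1^n`: vertices `i ≠ j` are adjacent iff the edge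
added at step `i` goes to `j` or vice versa. -/
def paGraph (n : ℕ) (σ : PASpace n) : SimpleGraph (Fin n) :=
  SimpleGraph.fromRel (fun i j => (σ i : ℕ) = j.1)


def paF {n : ℕ} (σ : PASpace n) (i : Fin n) : Fin n :=
  ⟨(σ i : ℕ), lt_of_lt_of_le (σ i).2 i.2⟩

lemma paF_lt {n : ℕ} (σ : PASpace n) (i : Fin n) (h : ¬ (σ i : ℕ) = i.1) :
    (paF σ i).1 < i.1 :=
  lt_of_le_of_ne (Nat.lt_succ_iff.mp (σ i).2) h

def paRoot {n : ℕ} (σ : PASpace n) (i : Fin n) : Fin n :=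
  if h : (σ i : ℕ) = i.1 then i else paRoot σ (paF σ i)
termination_by i.1
decreasing_by exact paF_lt σ i h

lemma paRoot_of_loop {n : ℕ} (σ : PASpace n) (i : Fin n) (h : (σ i : ℕ) = i.1) :
    paRoot σ i = i := by rw [paRoot, dif_pos h]

lemma paRoot_paF {n : ℕ} (σ : PASpace n) (i : Fin n) (h : ¬(σ i : ℕ) = i.1) :
    paRoot σ (paF σ i) = paRoot σ i := by
  conv_rhs => rw [paRoot]
  rw [dif_neg h]

lemma paRoot_loop {n : ℕ} (σ : PASpace n) : ∀ i : Fin n,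
    (σ (paRoot σ i) : ℕ) = (paRoot σ i).1
  | i => by
    by_cases h : (σ i : ℕ) = i.1
    · rw [paRoot_of_loop σ i h]; exact h
    · rw [← paRoot_paF σ i h]; exact paRoot_loop σ (paF σ i)
termination_by i => i.1
decreasing_by exact paF_lt σ i (by assumption)

lemma paRoot_reachable {n : ℕ} (σ : PASpace n) : ∀ i : Fin n,
    (paGraph n σ).Reachable i (paRoot σ i)
  | i => by
    by_cases h : (σ i : ℕ) = i.1
    · rw [paRoot_of_loop σ i h]
    · rw [← paRoot_paF σ i h]
      have hadj : (paGraph n σ).Adj i (paF σ i) := by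
        refine ⟨?_, Or.inl rfl⟩
        intro he
        exact h (congrArg Fin.val he).symm
      exact hadj.reachable.trans (paRoot_reachable σ (paF σ i))
termination_by i => i.1
decreasing_by exact paF_lt σ i (by assumption)

lemma paRoot_adj {n : ℕ} (σ : PASpace n) (i j : Fin n)
    (hadj : (paGraph n σ).Adj i j) : paRoot σ i = paRoot σ j := by
  obtain ⟨hne, hc⟩ := hadj
  rcases hc with h | h
  · have hF : paF σ i = j := Fin.ext h
    have hni : ¬(σ i : ℕ) = i.1 := by
      intro he; exact hne (Fin.ext (by rw [← h, he]))
    rw [← paRoot_paF σ i hni, hF]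
  · have hF : paF σ j = i := Fin.ext h
    have hnj : ¬(σ j : ℕ) = j.1 := by
      intro he; exact hne (Fin.ext (by rw [← h, he])).symm
    rw [← paRoot_paF σ j hnj, hF]

lemma paRoot_eq_of_reachable {n : ℕ} (σ : PASpace n) (i j : Fin n)
    (h : (paGraph n σ).Reachable i j) : paRoot σ i = paRoot σ j := by
  obtain ⟨w⟩ := h
  induction w with
  | nil => rfl
  | @cons u v x hadj p ih => exact (paRoot_adj σ u v hadj).trans ih

/-- number of components = number of loops -/
lemma card_components {n : ℕ} (σ : PASpace n) :
    Nat.card (paGraph n σ).ConnectedComponent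
      = (Finset.univ.filter (fun t : Fin n => (σ t : ℕ) = t.1)).card := by
  classical
  have e : (paGraph n σ).ConnectedComponent ≃ {i : Fin n // (σ i : ℕ) = i.1} := by
    refine Equiv.ofBijective
      (fun c => c.lift (fun i => (⟨paRoot σ i, paRoot_loop σ i⟩ : {i : Fin n // (σ i : ℕ) = i.1}))
        (fun i j p _ => Subtype.ext (paRoot_eq_of_reachable σ i j ⟨p⟩))) ⟨?_, ?_⟩
    · intro c1 c2 h
      induction c1 using SimpleGraph.ConnectedComponent.ind with | _ i =>
      induction c2 using SimpleGraph.ConnectedComponent.ind with | _ j =>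
      simp only [SimpleGraph.ConnectedComponent.lift_mk] at h
      have hroot : paRoot σ i = paRoot σ j := congrArg Subtype.val h
      exact SimpleGraph.ConnectedComponent.eq.mpr
        (((paRoot_reachable σ i).trans (hroot ▸ (paRoot_reachable σ j).symm)))
    · intro ⟨i, hi⟩
      exact ⟨(paGraph n σ).connectedComponentMk i, by
        simp only [SimpleGraph.ConnectedComponent.lift_mk]
        exact Subtype.ext (paRoot_of_loop σ i hi)⟩
  rw [Nat.card_congr e, Nat.card_eq_fintype_card, Fintype.card_subtype]

-- σ j ≤ j
lemma paLe {N : ℕ} (σ : PASpace N) (j : Fin N) : (σ j : ℕ) ≤ j.1 :=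
  Nat.lt_succ_iff.mp (σ j).2

lemma paDeg_self {N : ℕ} (τ : PASpace N) : paDeg τ N N = 0 := by
  unfold paDeg
  rw [if_neg (lt_irrefl N), Finset.filter_eq_empty_iff.mpr, Finset.card_empty]
  intro j _
  rintro ⟨hj, hv⟩
  exact absurd hv (Nat.ne_of_lt (lt_of_le_of_lt (paLe τ j) j.2))

lemma paDeg_sum {N : ℕ} (τ : PASpace N) : ∑ y : Fin N, paDeg τ y.1 N = 2 * N := by
  unfold paDeg
  rw [Finset.sum_add_distrib]
  have h1 : ∑ y : Fin N, (if y.1 < N then 1 else 0) = N := by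
    simp [Fin.is_lt]
  have h2 : ∑ y : Fin N,
      (Finset.univ.filter (fun j : Fin N => j.1 < N ∧ (τ j : ℕ) = y.1)).card = N := by
    have : ∀ y : Fin N, (Finset.univ.filter (fun j : Fin N => j.1 < N ∧ (τ j : ℕ) = y.1)).card
        = ∑ j : Fin N, (if (τ j : ℕ) = y.1 then 1 else 0) := by
      intro y
      rw [Finset.card_filter]
      exact Finset.sum_congr rfl (fun j _ => by simp [j.2])
    simp_rw [this]
    rw [Finset.sum_comm]
    have : ∀ j : Fin N, ∑ y : Fin N, (if (τ j : ℕ) = y.1 then (1:ℕ) else 0) = 1 := by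
      intro j
      have hc : (⟨(τ j : ℕ), lt_of_le_of_lt (paLe τ j) j.2⟩ : Fin N) ∈ Finset.univ :=
        Finset.mem_univ _
      rw [show (fun y : Fin N => if (τ j : ℕ) = y.1 then (1:ℕ) else 0)
          = (fun y : Fin N => if y = ⟨(τ j : ℕ), lt_of_le_of_lt (paLe τ j) j.2⟩ then 1 else 0)
        from funext fun y => if_congr ⟨fun h => Fin.ext h.symm, fun h => by rw [h]⟩ rfl rfl]
      rw [Finset.sum_ite_eq' Finset.univ _ (fun _ => (1:ℕ)), if_pos hc]
    simp_rw [this]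
    simp
  rw [h1, h2]; ring

lemma paDeg_snoc {N : ℕ} (τ : PASpace N) (x : Fin (N + 1)) (s t : ℕ) (ht : t ≤ N) :
    paDeg (Fin.snoc τ x : PASpace (N + 1)) s t = paDeg τ s t := by
  unfold paDeg
  congr 1
  rw [Finset.card_filter, Finset.card_filter, Fin.sum_univ_castSucc]
  have hlast : (if ((Fin.last N).1 < t ∧ ((Fin.snoc τ x : PASpace (N+1)) (Fin.last N) : ℕ) = s)
      then (1:ℕ) else 0) = 0 := by
    rw [if_neg]; rintro ⟨hl, _⟩; exact absurd hl (by simp; omega)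
  rw [hlast, add_zero]
  refine Finset.sum_congr rfl (fun j _ => ?_)
  congr 1
  · simp [Fin.snoc_castSucc]

/-- Master independence lemma for the loop indicators. -/
lemma paMaster (N : ℕ) (a b : ℕ → ℝ) :
    ∑ σ : PASpace N, ∏ t : Fin N,
      (((paDeg σ (σ t : ℕ) t.1 : ℝ) + (if (σ t : ℕ) = t.1 then 1 else 0)) /
          (2 * (t.1 : ℝ) + 1) *
        (if (σ t : ℕ) = t.1 then a t.1 else b t.1))
    = ∏ t ∈ Finset.range N, ((a t + 2 * t * b t) / (2 * (t : ℝ) + 1)) := by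
  induction N with
  | zero => simp
  | succ N ih =>
    rw [Finset.prod_range_succ, ← ih]
    rw [← Equiv.sum_comp (Fin.snocEquiv (fun i : Fin (N+1) => Fin (i.1+1)))]
    rw [Fintype.sum_prod_type]
    have hQ : ∀ τ : PASpace N, ∑ x : Fin (N+1),
        (((paDeg τ (x : ℕ) N : ℝ) + if (x : ℕ) = N then 1 else 0) / (2 * (N : ℝ) + 1) *
          (if (x : ℕ) = N then a N else b N))
        = (a N + 2 * N * b N) / (2 * (N : ℝ) + 1) := by
      intro τ
      rw [Fin.sum_univ_castSucc]
      have hlast : (((paDeg τ ((Fin.last N : Fin (N+1)) : ℕ) N : ℝ) +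
            if ((Fin.last N : Fin (N+1)) : ℕ) = N then 1 else 0) / (2 * (N : ℝ) + 1) *
          (if ((Fin.last N : Fin (N+1)) : ℕ) = N then a N else b N))
          = a N / (2 * (N : ℝ) + 1) := by
        simp [Fin.val_last, paDeg_self]
        ring
      have hcs : ∀ j : Fin N, (((paDeg τ ((j.castSucc : Fin (N+1)) : ℕ) N : ℝ) +
            if ((j.castSucc : Fin (N+1)) : ℕ) = N then 1 else 0) / (2 * (N : ℝ) + 1) *
          (if ((j.castSucc : Fin (N+1)) : ℕ) = N then a N else b N))
          = (paDeg τ (j : ℕ) N : ℝ) * b N / (2 * (N : ℝ) + 1) := by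
        intro j
        have hj : ¬ ((j.castSucc : Fin (N+1)) : ℕ) = N := by
          simp [Fin.coe_castSucc]; omega
        rw [if_neg hj, if_neg hj, Fin.coe_castSucc]
        ring
      rw [hlast, Finset.sum_congr rfl (fun j _ => hcs j), ← Finset.sum_div,
        ← Finset.sum_mul]
      have hsum : ∑ j : Fin N, (paDeg τ (j : ℕ) N : ℝ) = 2 * N := by
        rw [← Nat.cast_sum]
        norm_cast
        exact paDeg_sum τ
      rw [hsum]
      ring
    have hstep : ∀ (x : Fin (N+1)) (τ : PASpace N),
        (∏ t : Fin (N+1),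
          (((paDeg (Fin.snoc τ x : PASpace (N+1))
                ((Fin.snoc τ x : PASpace (N+1)) t : ℕ) t.1 : ℝ) +
              (if ((Fin.snoc τ x : PASpace (N+1)) t : ℕ) = t.1 then 1 else 0)) /
            (2 * (t.1 : ℝ) + 1) *
            (if ((Fin.snoc τ x : PASpace (N+1)) t : ℕ) = t.1 then a t.1 else b t.1)))
        = (∏ t : Fin N,
            (((paDeg τ (τ t : ℕ) t.1 : ℝ) + (if (τ t : ℕ) = t.1 then 1 else 0)) /
              (2 * (t.1 : ℝ) + 1) *
              (if (τ t : ℕ) = t.1 then a t.1 else b t.1))) *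
          ((((paDeg τ (x : ℕ) N : ℝ) + if (x : ℕ) = N then 1 else 0) / (2 * (N : ℝ) + 1)) *
            (if (x : ℕ) = N then a N else b N)) := by
      intro x τ
      rw [Fin.prod_univ_castSucc]
      congr 1
      · refine Finset.prod_congr rfl (fun t _ => ?_)
        have h1 : (Fin.snoc τ x : PASpace (N+1)) t.castSucc = τ t := Fin.snoc_castSucc ..
        rw [h1]
        simp only [Fin.coe_castSucc]
        rw [paDeg_snoc τ x _ t.1 (le_of_lt t.2)]
      · have h2 : (Fin.snoc τ x : PASpace (N+1)) (Fin.last N) = x := Fin.snoc_last ..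
        rw [h2]
        simp only [Fin.val_last]
        rw [paDeg_snoc τ x _ N le_rfl]
    calc ∑ x : Fin (N+1), ∑ τ : PASpace N, _
        = ∑ x : Fin (N+1), ∑ τ : PASpace N,
          ((∏ t : Fin N,
            (((paDeg τ (τ t : ℕ) t.1 : ℝ) + (if (τ t : ℕ) = t.1 then 1 else 0)) /
              (2 * (t.1 : ℝ) + 1) *
              (if (τ t : ℕ) = t.1 then a t.1 else b t.1))) *
          ((((paDeg τ (x : ℕ) N : ℝ) + if (x : ℕ) = N then 1 else 0) / (2 * (N : ℝ) + 1)) *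
            (if (x : ℕ) = N then a N else b N))) := by
          refine Finset.sum_congr rfl (fun x _ => Finset.sum_congr rfl (fun τ _ => ?_))
          exact hstep x τ
      _ = ∑ τ : PASpace N,
          ((∏ t : Fin N,
            (((paDeg τ (τ t : ℕ) t.1 : ℝ) + (if (τ t : ℕ) = t.1 then 1 else 0)) /
              (2 * (t.1 : ℝ) + 1) *
              (if (τ t : ℕ) = t.1 then a t.1 else b t.1))) *
            ∑ x : Fin (N+1), ((((paDeg τ (x : ℕ) N : ℝ) + if (x : ℕ) = N then 1 else 0) /
              (2 * (N : ℝ) + 1)) * (if (x : ℕ) = N then a N else b N))) := by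
          rw [Finset.sum_comm]
          exact Finset.sum_congr rfl (fun τ _ => (Finset.mul_sum _ _ _).symm)
      _ = _ := by
          rw [Finset.sum_mul]
          refine Finset.sum_congr rfl (fun τ _ => ?_)
          rw [hQ τ]

def paI {N : ℕ} (σ : PASpace N) (t : Fin N) : ℝ := if (σ t : ℕ) = t.1 then 1 else 0

lemma paI_nonneg {N : ℕ} (σ : PASpace N) (t : Fin N) : 0 ≤ paI σ t := by
  unfold paI; split <;> norm_num

lemma paI_sq {N : ℕ} (σ : PASpace N) (t : Fin N) : paI σ t * paI σ t = paI σ t := by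
  unfold paI; split <;> ring

lemma paWeight_nonneg {N : ℕ} (σ : PASpace N) : 0 ≤ paWeight σ := by
  unfold paWeight
  apply Finset.prod_nonneg
  intro t _
  have : (0:ℝ) ≤ (if (σ t : ℕ) = t.1 then (1:ℝ) else 0) := by split <;> norm_num
  positivity

lemma paExp {N : ℕ} (a b : ℕ → ℝ) :
    ∑ σ : PASpace N, paWeight σ *
      ∏ t : Fin N, (if (σ t : ℕ) = t.1 then a t.1 else b t.1)
    = ∏ t ∈ Finset.range N, ((a t + 2 * t * b t) / (2 * (t : ℝ) + 1)) := by
  rw [← paMaster]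
  refine Finset.sum_congr rfl (fun σ _ => ?_)
  rw [paWeight, ← Finset.prod_mul_distrib]

def paP (t : ℕ) : ℝ := 1 / (2 * (t : ℝ) + 1)

lemma paP_pos (t : ℕ) : 0 < paP t := by unfold paP; positivity

lemma paP_le_one (t : ℕ) : paP t ≤ 1 := by
  unfold paP
  rw [div_le_one (by positivity)]
  have : (0:ℝ) ≤ (t:ℝ) := Nat.cast_nonneg t
  linarith

lemma paE1 {N : ℕ} : ∑ σ : PASpace N, paWeight σ = 1 := by
  have := paExp (N := N) (fun _ => 1) (fun _ => 1)
  simp only [ite_self, Finset.prod_const_one, mul_one] at this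
  rw [this]
  apply Finset.prod_eq_one
  intro t _
  have h : (2 * (t:ℝ) + 1) ≠ 0 := by positivity
  field_simp
  ring

lemma paEI {N : ℕ} (t0 : Fin N) :
    ∑ σ : PASpace N, paWeight σ * paI σ t0 = paP t0.1 := by
  have key := paExp (N := N) (fun _ => 1) (fun u => if u = t0.1 then 0 else 1)
  have hL : ∀ σ : PASpace N,
      (∏ t : Fin N, (if (σ t : ℕ) = t.1 then (1:ℝ) else if t.1 = t0.1 then 0 else 1))
      = paI σ t0 := by
    intro σ
    rw [Finset.prod_eq_single t0 (fun t _ ht => ?_) (by simp)]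
    · unfold paI; split
      · rfl
      · rw [if_pos rfl]
    · have : ¬ t.1 = t0.1 := fun h => ht (Fin.ext h)
      rw [if_neg this]
      split <;> rfl
  simp_rw [hL] at key
  rw [key]
  rw [Finset.prod_eq_single t0.1 (fun u _ hu => ?_) (by simp [t0.2])]
  · rw [if_pos rfl]
    unfold paP
    ring_nf
  · rw [if_neg hu]
    have h : (2 * (u:ℝ) + 1) ≠ 0 := by positivity
    field_simp
    ring

lemma paEII {N : ℕ} (t0 t1 : Fin N) (hne : t0 ≠ t1) :
    ∑ σ : PASpace N, paWeight σ * (paI σ t0 * paI σ t1) = paP t0.1 * paP t1.1 := by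
  have key := paExp (N := N) (fun _ => 1)
    (fun u => if u = t0.1 ∨ u = t1.1 then 0 else 1)
  have hL : ∀ σ : PASpace N,
      (∏ t : Fin N, (if (σ t : ℕ) = t.1 then (1:ℝ)
          else if t.1 = t0.1 ∨ t.1 = t1.1 then 0 else 1))
      = paI σ t0 * paI σ t1 := by
    intro σ
    classical
    rw [show Finset.univ = insert t0 (Finset.univ.erase t0) from
      (Finset.insert_erase (Finset.mem_univ t0)).symm]
    rw [Finset.prod_insert (Finset.notMem_erase _ _)]
    rw [show Finset.univ.erase t0 = insert t1 ((Finset.univ.erase t0).erase t1) from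
      (Finset.insert_erase (Finset.mem_erase.mpr ⟨hne.symm, Finset.mem_univ t1⟩)).symm]
    rw [Finset.prod_insert (Finset.notMem_erase _ _)]
    have h0 : (if (σ t0 : ℕ) = t0.1 then (1:ℝ)
        else if t0.1 = t0.1 ∨ t0.1 = t1.1 then 0 else 1) = paI σ t0 := by
      unfold paI; split
      · rfl
      · rw [if_pos (Or.inl rfl)]
    have h1 : (if (σ t1 : ℕ) = t1.1 then (1:ℝ)
        else if t1.1 = t0.1 ∨ t1.1 = t1.1 then 0 else 1) = paI σ t1 := by
      unfold paI; split
      · rfl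
      · rw [if_pos (Or.inr rfl)]
    have hrest : ∀ t ∈ (Finset.univ.erase t0).erase t1,
        (if (σ t : ℕ) = t.1 then (1:ℝ)
          else if t.1 = t0.1 ∨ t.1 = t1.1 then 0 else 1) = 1 := by
      intro t ht
      rw [Finset.mem_erase, Finset.mem_erase] at ht
      obtain ⟨ht1, ht0, -⟩ := ht
      have : ¬ (t.1 = t0.1 ∨ t.1 = t1.1) := by
        rintro (h | h)
        · exact ht0 (Fin.ext h)
        · exact ht1 (Fin.ext h)
      rw [if_neg this]
      split <;> rfl
    rw [Finset.prod_congr rfl hrest, Finset.prod_const_one, h0, h1]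
    ring
  simp_rw [hL] at key
  rw [key]
  classical
  have hmem0 : t0.1 ∈ Finset.range N := Finset.mem_range.mpr t0.2
  have hmem1 : t1.1 ∈ Finset.range N := Finset.mem_range.mpr t1.2
  have hne' : t0.1 ≠ t1.1 := fun h => hne (Fin.ext h)
  rw [show Finset.range N = insert t0.1 ((Finset.range N).erase t0.1) from
    (Finset.insert_erase hmem0).symm]
  rw [Finset.prod_insert (Finset.notMem_erase _ _)]
  rw [show (Finset.range N).erase t0.1
      = insert t1.1 (((Finset.range N).erase t0.1).erase t1.1) from
    (Finset.insert_erase (Finset.mem_erase.mpr ⟨hne'.symm, hmem1⟩)).symm]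
  rw [Finset.prod_insert (Finset.notMem_erase _ _)]
  have e0 : ((1:ℝ) + 2 * t0.1 * (if t0.1 = t0.1 ∨ t0.1 = t1.1 then 0 else 1)) /
      (2 * (t0.1:ℝ) + 1) = paP t0.1 := by
    rw [if_pos (Or.inl rfl)]; unfold paP; ring_nf
  have e1 : ((1:ℝ) + 2 * t1.1 * (if t1.1 = t0.1 ∨ t1.1 = t1.1 then 0 else 1)) /
      (2 * (t1.1:ℝ) + 1) = paP t1.1 := by
    rw [if_pos (Or.inr rfl)]; unfold paP; ring_nf
  have erest : ∀ u ∈ ((Finset.range N).erase t0.1).erase t1.1,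
      ((1:ℝ) + 2 * u * (if u = t0.1 ∨ u = t1.1 then 0 else 1)) / (2 * (u:ℝ) + 1) = 1 := by
    intro u hu
    rw [Finset.mem_erase, Finset.mem_erase] at hu
    obtain ⟨hu1, hu0, -⟩ := hu
    rw [if_neg (by tauto)]
    have h : (2 * (u:ℝ) + 1) ≠ 0 := by positivity
    field_simp
    ring
  rw [Finset.prod_congr rfl erest, Finset.prod_const_one, e0, e1]
  ring

def paL {N : ℕ} (σ : PASpace N) : ℝ := ∑ t : Fin N, paI σ t

def paMu (N : ℕ) : ℝ := ∑ t : Fin N, paP t.1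

def paV (N : ℕ) : ℝ := ∑ t : Fin N, (paP t.1 - (paP t.1) ^ 2)

lemma paEL {N : ℕ} : ∑ σ : PASpace N, paWeight σ * paL σ = paMu N := by
  unfold paL paMu
  simp_rw [Finset.mul_sum]
  rw [Finset.sum_comm]
  exact Finset.sum_congr rfl (fun t _ => paEI t)

lemma paEL2 {N : ℕ} :
    ∑ σ : PASpace N, paWeight σ * (paL σ) ^ 2 = (paMu N) ^ 2 + paV N := by
  have expand : ∀ σ : PASpace N, paWeight σ * (paL σ) ^ 2
      = ∑ t : Fin N, ∑ s : Fin N, paWeight σ * (paI σ t * paI σ s) := by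
    intro σ
    rw [paL, sq, Finset.sum_mul_sum]
    rw [Finset.mul_sum]
    refine Finset.sum_congr rfl (fun t _ => ?_)
    rw [Finset.mul_sum]
  simp_rw [expand]
  rw [Finset.sum_comm]
  have swap2 : ∀ t : Fin N,
      ∑ σ : PASpace N, ∑ s : Fin N, paWeight σ * (paI σ t * paI σ s)
      = ∑ s : Fin N, ∑ σ : PASpace N, paWeight σ * (paI σ t * paI σ s) :=
    fun t => Finset.sum_comm
  simp_rw [swap2]
  have inner : ∀ t s : Fin N, ∑ σ : PASpace N, paWeight σ * (paI σ t * paI σ s)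
      = if t = s then paP t.1 else paP t.1 * paP s.1 := by
    intro t s
    split
    · next h =>
      subst h
      calc ∑ σ : PASpace N, paWeight σ * (paI σ t * paI σ t)
          = ∑ σ : PASpace N, paWeight σ * paI σ t :=
            Finset.sum_congr rfl (fun σ _ => by rw [paI_sq])
        _ = paP t.1 := paEI t
    · next h => exact paEII t s h
  simp_rw [inner]
  have diag : ∀ t : Fin N,
      ∑ s : Fin N, (if t = s then paP t.1 else paP t.1 * paP s.1)
      = paP t.1 * paMu N + (paP t.1 - (paP t.1) ^ 2) := by
    intro t
    have split : ∀ s : Fin N, (if t = s then paP t.1 else paP t.1 * paP s.1)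
        = paP t.1 * paP s.1 + (if t = s then paP t.1 - (paP t.1) ^ 2 else 0) := by
      intro s
      split
      · next h => subst h; ring
      · ring
    rw [Finset.sum_congr rfl (fun s _ => split s), Finset.sum_add_distrib,
      Finset.sum_ite_eq Finset.univ t (fun _ => paP t.1 - (paP t.1) ^ 2),
      if_pos (Finset.mem_univ t), ← Finset.mul_sum]
    rfl
  rw [Finset.sum_congr rfl (fun t _ => diag t), Finset.sum_add_distrib, ← Finset.sum_mul]
  rw [show (∑ t : Fin N, paP t.1) = paMu N from rfl]
  rw [show (∑ t : Fin N, (paP t.1 - (paP t.1) ^ 2)) = paV N from rfl]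
  ring

lemma paVar {N : ℕ} :
    ∑ σ : PASpace N, paWeight σ * (paL σ - paMu N) ^ 2 = paV N := by
  have expand : ∀ σ : PASpace N, paWeight σ * (paL σ - paMu N) ^ 2
      = paWeight σ * (paL σ) ^ 2 - 2 * paMu N * (paWeight σ * paL σ)
        + (paMu N) ^ 2 * paWeight σ := by
    intro σ; ring
  simp_rw [expand]
  rw [Finset.sum_add_distrib, Finset.sum_sub_distrib, ← Finset.mul_sum, ← Finset.mul_sum,
    paEL2, paEL, paE1]
  ring

lemma paV_le {N : ℕ} : paV N ≤ paMu N := by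
  unfold paV paMu
  refine Finset.sum_le_sum (fun t _ => ?_)
  have := sq_nonneg (paP t.1)
  linarith

open scoped Classical in
lemma paProb_mono {N : ℕ} (B E : PASpace N → Prop) (h : ∀ σ, B σ → E σ) :
    paProb N B ≤ paProb N E := by
  unfold paProb
  refine Finset.sum_le_sum (fun σ _ => ?_)
  by_cases hB : B σ
  · rw [if_pos hB, if_pos (h σ hB)]
  · rw [if_neg hB]
    split
    · exact paWeight_nonneg σ
    · exact le_refl _

open scoped Classical in
lemma paProb_le_one {N : ℕ} (E : PASpace N → Prop) : paProb N E ≤ 1 := by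
  unfold paProb
  rw [← paE1 (N := N)]
  refine Finset.sum_le_sum (fun σ _ => ?_)
  split
  · exact le_refl _
  · exact paWeight_nonneg σ

open scoped Classical in
lemma paCheb {N : ℕ} (aa : ℝ) (ha : 0 < aa) :
    1 - paV N / aa ^ 2 ≤ paProb N (fun σ => |paL σ - paMu N| ≤ aa) := by
  have hsplit : paProb N (fun σ => |paL σ - paMu N| ≤ aa)
      = 1 - ∑ σ : PASpace N, (if ¬ (|paL σ - paMu N| ≤ aa) then paWeight σ else 0) := by
    unfold paProb
    rw [eq_sub_iff_add_eq, ← Finset.sum_add_distrib, ← paE1 (N := N)]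
    refine Finset.sum_congr rfl (fun σ _ => ?_)
    by_cases h : |paL σ - paMu N| ≤ aa
    · rw [if_pos h, if_neg (not_not_intro h), add_zero]
    · rw [if_neg h, if_pos h, zero_add]
  rw [hsplit]
  have hbound : ∑ σ : PASpace N, (if ¬ (|paL σ - paMu N| ≤ aa) then paWeight σ else 0)
      ≤ paV N / aa ^ 2 := by
    rw [← paVar (N := N), Finset.sum_div]
    refine Finset.sum_le_sum (fun σ _ => ?_)
    by_cases h : |paL σ - paMu N| ≤ aa
    · rw [if_neg (not_not_intro h)]
      have hw := paWeight_nonneg σ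
      positivity
    · rw [if_pos h]
      have hlt : aa ≤ |paL σ - paMu N| := le_of_lt (lt_of_not_ge h)
      have h1 : aa ^ 2 ≤ (paL σ - paMu N) ^ 2 := by
        rw [← sq_abs (paL σ - paMu N)]
        exact pow_le_pow_left₀ ha.le hlt 2
      have h2 : (1:ℝ) ≤ (paL σ - paMu N) ^ 2 / aa ^ 2 :=
        (one_le_div (by positivity)).mpr h1
      calc paWeight σ = paWeight σ * 1 := (mul_one _).symm
        _ ≤ paWeight σ * ((paL σ - paMu N) ^ 2 / aa ^ 2) :=
            mul_le_mul_of_nonneg_left h2 (paWeight_nonneg σ)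
        _ = paWeight σ * (paL σ - paMu N) ^ 2 / aa ^ 2 := by rw [mul_div_assoc]
  linarith


lemma paMu_as_range (N : ℕ) : paMu N = ∑ t ∈ Finset.range N, paP t := by
  rw [paMu, Fin.sum_univ_eq_sum_range]

lemma harmonic_cast (N : ℕ) :
    ((harmonic N : ℚ) : ℝ) = ∑ i ∈ Finset.range N, ((i : ℝ) + 1)⁻¹ := by
  rw [harmonic]
  push_cast
  rfl

lemma paMu_lower (N : ℕ) : Real.log N / 2 ≤ paMu N := by
  rcases Nat.eq_zero_or_pos N with h | h
  · subst h; simp [paMu]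
  have h1 : ((harmonic N : ℚ) : ℝ) / 2 ≤ paMu N := by
    rw [harmonic_cast, paMu_as_range, Finset.sum_div]
    refine Finset.sum_le_sum (fun i _ => ?_)
    rw [paP, inv_eq_one_div, div_div, div_le_div_iff₀ (by positivity) (by positivity)]
    push_cast
    nlinarith [Nat.cast_nonneg (α := ℝ) i]
  have h2 : Real.log N ≤ ((harmonic N : ℚ) : ℝ) := by
    calc Real.log N ≤ Real.log (N + 1) := by
          apply Real.log_le_log (by positivity)
          push_cast; linarith
      _ ≤ _ := by
          have := log_add_one_le_harmonic N
          push_cast at this ⊢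
          exact this
  linarith

lemma paMu_upper (N : ℕ) (hN : 1 ≤ N) : paMu N ≤ Real.log N / 2 + 3 / 2 := by
  obtain ⟨M, rfl⟩ : ∃ M, N = M + 1 := ⟨N - 1, (Nat.succ_pred_eq_of_pos hN).symm⟩
  rw [paMu_as_range, Finset.sum_range_succ']
  have h0 : paP 0 = 1 := by norm_num [paP]
  have h1 : ∑ i ∈ Finset.range M, paP (i + 1)
      ≤ ((harmonic M : ℚ) : ℝ) / 2 := by
    rw [harmonic_cast, Finset.sum_div]
    refine Finset.sum_le_sum (fun i _ => ?_)
    rw [paP, inv_eq_one_div, div_div, div_le_div_iff₀ (by positivity) (by positivity)]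
    push_cast
    nlinarith [Nat.cast_nonneg (α := ℝ) i]
  have h2 : ((harmonic M : ℚ) : ℝ) ≤ 1 + Real.log M := by
    have := harmonic_le_one_add_log M
    push_cast at this ⊢
    exact this
  have h3 : Real.log M ≤ Real.log (M + 1) := by
    rcases Nat.eq_zero_or_pos M with h | h
    · subst h; norm_num
    · apply Real.log_le_log (by positivity)
      push_cast; linarith
  have : (((M : ℕ) : ℝ) + 1) = ((M + 1 : ℕ) : ℝ) := by push_cast; ring
  rw [h0]
  push_cast
  linarith

lemma paL_card {n : ℕ} (σ : PASpace n) :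
    ((Finset.univ.filter (fun t : Fin n => (σ t : ℕ) = t.1)).card : ℝ) = paL σ := by
  rw [Finset.card_filter]
  push_cast
  unfold paL paI
  refine Finset.sum_congr rfl (fun t _ => ?_)
  split <;> simp

/-- a.a.s. the number of connected components of `G_1^n` is
`(1/2 + o(1))·log n`: for every `ε > 0`, the probability that
`|C_n/log n − 1/2| ≤ ε` tends to `1` as `n → ∞`. -/
theorem statement15 :
    ∀ ε : ℝ, 0 < ε →
      Filter.Tendsto
        (fun n : ℕ => paProb n
          (fun σ =>
            |(Nat.card (paGraph n σ).ConnectedComponent : ℝ) / Real.log n - 1 / 2| ≤ ε))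
        Filter.atTop (nhds 1) := by
  intro ε hε
  have hlogto : Filter.Tendsto (fun n : ℕ => Real.log n) Filter.atTop Filter.atTop :=
    Real.tendsto_log_atTop.comp tendsto_natCast_atTop_atTop
  have hlow : Filter.Tendsto (fun n : ℕ => 1 - 8 / (ε ^ 2 * Real.log n))
      Filter.atTop (nhds 1) := by
    have h0 : Filter.Tendsto (fun n : ℕ => 8 / (ε ^ 2 * Real.log n))
        Filter.atTop (nhds 0) :=
      Filter.Tendsto.div_atTop tendsto_const_nhds
        (hlogto.const_mul_atTop (by positivity))
    have := (tendsto_const_nhds (x := (1:ℝ)) (f := Filter.atTop (α := ℕ))).sub h0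
    simpa using this
  refine tendsto_of_tendsto_of_tendsto_of_le_of_le' hlow tendsto_const_nhds ?_ ?_
  · -- eventual lower bound
    filter_upwards [hlogto.eventually_ge_atTop (max (3 / ε) 1),
      Filter.eventually_ge_atTop 1] with n hlog hn
    have hl1 : 1 ≤ Real.log n := le_trans (le_max_right _ _) hlog
    have hl3 : 3 / ε ≤ Real.log n := le_trans (le_max_left _ _) hlog
    have hlpos : 0 < Real.log n := lt_of_lt_of_le one_pos hl1
    set l := Real.log n with hldef
    set aa := ε / 2 * l with haadef
    have haapos : 0 < aa := by positivity
    have hmu1 : l / 2 ≤ paMu n := paMu_lower n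
    have hmu2 : paMu n ≤ l / 2 + 3 / 2 := paMu_upper n hn
    have hsub : ∀ σ : PASpace n, |paL σ - paMu n| ≤ aa →
        |(Nat.card (paGraph n σ).ConnectedComponent : ℝ) / Real.log n - 1 / 2| ≤ ε := by
      intro σ hσ
      have hC : (Nat.card (paGraph n σ).ConnectedComponent : ℝ) = paL σ := by
        rw [card_components]
        exact paL_card σ
      rw [hC, ← hldef]
      have hsplit : paL σ / l - 1 / 2 = ((paL σ - paMu n) + (paMu n - l / 2)) / l := by
        field_simp
        ring
      rw [hsplit, abs_div, abs_of_pos hlpos, div_le_iff₀ hlpos]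
      have habs : |(paL σ - paMu n) + (paMu n - l / 2)| ≤ aa + 3 / 2 := by
        refine le_trans (abs_add_le _ _) ?_
        have h2 : |paMu n - l / 2| ≤ 3 / 2 := abs_le.mpr ⟨by linarith, by linarith⟩
        linarith
      have h32 : (3:ℝ) / 2 ≤ ε / 2 * l := by
        have : 3 ≤ ε * l := by
          rw [div_le_iff₀ hε] at hl3
          linarith [mul_comm ε l]
        linarith
      calc |(paL σ - paMu n) + (paMu n - l / 2)| ≤ aa + 3 / 2 := habs
        _ ≤ ε / 2 * l + ε / 2 * l := by rw [haadef]; linarith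
        _ = ε * l := by ring
    have hVle : paV n ≤ 2 * l := by
      have := paV_le (N := n)
      linarith
    have hdiv : paV n / aa ^ 2 ≤ 8 / (ε ^ 2 * l) := by
      rw [div_le_div_iff₀ (by positivity) (by positivity)]
      have h4 : paV n * (ε ^ 2 * l) ≤ (2 * l) * (ε ^ 2 * l) :=
        mul_le_mul_of_nonneg_right hVle (by positivity)
      refine le_trans h4 (le_of_eq ?_)
      rw [haadef]; ring
    calc 1 - 8 / (ε ^ 2 * l) ≤ 1 - paV n / aa ^ 2 := by linarith
      _ ≤ paProb n (fun σ => |paL σ - paMu n| ≤ aa) := paCheb aa haapos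
      _ ≤ paProb n (fun σ =>
            |(Nat.card (paGraph n σ).ConnectedComponent : ℝ) / Real.log n - 1 / 2| ≤ ε) :=
          paProb_mono _ _ hsub
  · exact Filter.Eventually.of_forall (fun n => paProb_le_one _)

end
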